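/- Let R be a ring, n a positive integer, and T_n(R) the ring of n-by-n upper triangular matrices over R. Let J_{ij} (1 ≤ i ≤ j ≤ n) be ideals of R satisfying J_{ik} ⊆ J_{i,k+1} and J_{i+1,k} ⊆ J_{ik} (whenever the indices make sense), and let I be the ideal of T_n(R) consisting of all upper triangular matrices whose (i,j) entry lies in J_{ij} for all i ≤ j. Then I is a z°-ideal of T_n(R) if and only if each diagonal ideal J_{ii} (1 ≤ i ≤ n) is a z°-ideal of R and J_{ij} = R for all j > i. -/

import Mathlib

open TwoSidedIdeal

/-- Left annihilator of a set: `l(S) = {x | ∀ s ∈ S, x*s = 0}`. -/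
def lAnn (R : Type*) [Ring R] (S : Set R) : Set R := {x | ∀ s ∈ S, x * s = 0}

/-- Right annihilator of a set: `r(S) = {x | ∀ s ∈ S, s*x = 0}`. -/
def rAnn (R : Type*) [Ring R] (S : Set R) : Set R := {x | ∀ s ∈ S, s * x = 0}

/-- A ring is semiprime if `I² = 0` implies `I = 0` for every two-sided ideal `I`. -/
def IsSemiprimeRing (R : Type*) [Ring R] : Prop :=
  ∀ I : TwoSidedIdeal R, (∀ a ∈ I, ∀ b ∈ I, a * b = 0) → I = ⊥

/-- A two-sided ideal `P` is prime if it is proper and `IJ ⊆ P` implies `I ⊆ P` or `J ⊆ P`. -/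
def IsPrimeTSI {R : Type*} [Ring R] (P : TwoSidedIdeal R) : Prop :=
  P ≠ ⊤ ∧ ∀ I J : TwoSidedIdeal R, (∀ a ∈ I, ∀ b ∈ J, a * b ∈ P) → I ≤ P ∨ J ≤ P

/-- A minimal prime ideal: a prime two-sided ideal minimal among primes. -/
def IsMinPrime {R : Type*} [Ring R] (P : TwoSidedIdeal R) : Prop :=
  IsPrimeTSI P ∧ ∀ Q : TwoSidedIdeal R, IsPrimeTSI Q → Q ≤ P → Q = P

/-- `Pmin R B` is the intersection of all minimal prime ideals of `R` containing the set `B`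
(equal to all of `R` if there are none). -/
def Pmin (R : Type*) [Ring R] (B : Set R) : Set R :=
  ⋂ P ∈ {P : TwoSidedIdeal R | IsMinPrime P ∧ B ⊆ (P : Set R)}, (P : Set R)

/-- `Pa a` : the intersection of all minimal prime ideals containing `a`. -/
def Pa {R : Type*} [Ring R] (a : R) : Set R := Pmin R {a}

/-- An ideal `I` is a z°-ideal if `P_a ⊆ I` for every `a ∈ I`. -/
def IsZoIdeal {R : Type*} [Ring R] (I : TwoSidedIdeal R) : Prop :=
  ∀ a ∈ I, Pa a ⊆ (I : Set R)

/-- An ideal `I` is a right d-ideal if `r(l(RaR)) ⊆ I` for every `a ∈ I`. -/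
def IsRightDIdeal {R : Type*} [Ring R] (I : TwoSidedIdeal R) : Prop :=
  ∀ a ∈ I, rAnn R (lAnn R (span {a} : Set R)) ⊆ (I : Set R)

/-- An ideal `I` is a right annihilator ideal if `I = r(l(I))`. -/
def IsRightAnnIdeal {R : Type*} [Ring R] (I : TwoSidedIdeal R) : Prop :=
  (I : Set R) = rAnn R (lAnn R (I : Set R))

/-- The ring `Tₙ(R)` of upper triangular `n × n` matrices over `R`, as a subring of the
full matrix ring. -/
def upperTriangularSubring (n : ℕ) (R : Type*) [Ring R] :
    Subring (Matrix (Fin n) (Fin n) R) where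
  carrier := {M | ∀ i j : Fin n, j < i → M i j = 0}
  zero_mem' := fun _ _ _ => rfl
  one_mem' := fun _ _ hij => Matrix.one_apply_ne (ne_of_gt hij)
  add_mem' := fun ha hb i j hij => by
    rw [Matrix.add_apply, ha i j hij, hb i j hij, add_zero]
  neg_mem' := fun ha i j hij => by rw [Matrix.neg_apply, ha i j hij, neg_zero]
  mul_mem' := fun {a b} ha hb i j hij => by
    rw [Matrix.mul_apply]
    apply Finset.sum_eq_zero
    intro k _
    rcases lt_or_ge k i with h | h
    · rw [ha i k h, zero_mul]
    · rw [hb k j (lt_of_lt_of_le hij h), mul_zero]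

namespace ZoAux

variable {n : ℕ} {R : Type*} [Ring R]

abbrev TT (n : ℕ) (R : Type*) [Ring R] := ↥(upperTriangularSubring n R)

lemma lowzero (M : TT n R) {i j : Fin n} (h : j < i) : (M : Matrix (Fin n) (Fin n) R) i j = 0 :=
  M.2 i j h

lemma mul_diag (a b : TT n R) (k : Fin n) :
    ((a * b : TT n R) : Matrix (Fin n) (Fin n) R) k k
      = (a : Matrix (Fin n) (Fin n) R) k k * (b : Matrix (Fin n) (Fin n) R) k k := by
  show ((a : Matrix (Fin n) (Fin n) R) * (b : Matrix (Fin n) (Fin n) R)) k k = _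
  rw [Matrix.mul_apply]
  apply Finset.sum_eq_single k
  · intro l _ hl
    rcases lt_or_gt_of_ne hl with h | h
    · rw [lowzero a h, zero_mul]
    · rw [lowzero b h, mul_zero]
  · intro h; exact absurd (Finset.mem_univ k) h

/-- single entry matrix at (i,j), i ≤ j -/
def eM (i j : Fin n) (hij : i ≤ j) (r : R) : TT n R :=
  ⟨Matrix.single i j r, by
    intro i' j' h
    apply Matrix.single_apply_of_ne
    rintro ⟨rfl, rfl⟩
    exact absurd hij (not_le.2 h)⟩

lemma eM_apply (i j : Fin n) (hij : i ≤ j) (r : R) (i' j' : Fin n) :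
    (eM i j hij r : Matrix (Fin n) (Fin n) R) i' j'
      = if i = i' ∧ j = j' then r else 0 := by
  by_cases h : i = i' ∧ j = j'
  · obtain ⟨rfl, rfl⟩ := h
    simp [eM]
  · rw [if_neg h]
    exact Matrix.single_apply_of_ne (c := r) (h := h)

@[simp] lemma eM_diag (k : Fin n) (r : R) (l : Fin n) :
    (eM k k le_rfl r : Matrix (Fin n) (Fin n) R) l l = if k = l then r else 0 := by
  rw [eM_apply k k le_rfl r l l]; by_cases h : k = l <;> simp [h]

lemma eM_add (k : Fin n) (r s : R) :
    eM k k le_rfl (r + s) = eM k k le_rfl r + eM k k le_rfl s := by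
  apply Subtype.ext
  show _ = (_ : Matrix (Fin n) (Fin n) R) + _
  simp [eM, Matrix.single_add]

lemma eM_zero (k : Fin n) : eM k k le_rfl (0 : R) = 0 := by
  apply Subtype.ext
  show _ = (0 : Matrix (Fin n) (Fin n) R)
  simp [eM]

lemma eM_neg (k : Fin n) (r : R) : eM k k le_rfl (-r) = - eM k k le_rfl r := by
  apply Subtype.ext
  show _ = -(_ : Matrix (Fin n) (Fin n) R)
  apply Matrix.ext
  intro i j
  simp only [eM, Matrix.neg_apply]
  by_cases h : k = i ∧ k = j
  · obtain ⟨rfl, rfl⟩ := h; simp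
  · rw [Matrix.single_apply_of_ne (h := h), Matrix.single_apply_of_ne (h := h),
      neg_zero]

lemma eM_mul (k : Fin n) (r s : R) :
    eM k k le_rfl r * eM k k le_rfl s = eM k k le_rfl (r * s) := by
  apply Subtype.ext
  show (_ : Matrix (Fin n) (Fin n) R) * _ = _
  simp [eM, Matrix.single_mul_single_same]

end ZoAux

namespace ZoAux

variable {n : ℕ} {R : Type*} [Ring R]

/-- the ideal of matrices vanishing on the first `k` diagonals -/
def Nk (n : ℕ) (R : Type*) [Ring R] (k : ℕ) : TwoSidedIdeal (TT n R) :=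
  TwoSidedIdeal.mk'
    {M | ∀ i j : Fin n, (j : ℕ) < (i : ℕ) + k → (M : Matrix (Fin n) (Fin n) R) i j = 0}
    (fun _ _ _ => rfl)
    (fun {x y} hx hy i j h => by
      show (x : Matrix (Fin n) (Fin n) R) i j + (y : Matrix (Fin n) (Fin n) R) i j = 0
      rw [hx i j h, hy i j h, add_zero])
    (fun {x} hx i j h => by
      show -(x : Matrix (Fin n) (Fin n) R) i j = 0
      rw [hx i j h, neg_zero])
    (fun {x y} hy i j h => by
      show ((x : Matrix (Fin n) (Fin n) R) * (y : Matrix (Fin n) (Fin n) R)) i j = 0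
      rw [Matrix.mul_apply]
      apply Finset.sum_eq_zero
      intro l _
      rcases lt_or_ge l i with hl | hl
      · rw [lowzero x hl, zero_mul]
      · rw [hy l j (lt_of_lt_of_le h (by omega)), mul_zero])
    (fun {x y} hx i j h => by
      show ((x : Matrix (Fin n) (Fin n) R) * (y : Matrix (Fin n) (Fin n) R)) i j = 0
      rw [Matrix.mul_apply]
      apply Finset.sum_eq_zero
      intro l _
      rcases lt_or_ge (l : ℕ) ((i : ℕ) + k) with hl | hl
      · rw [hx i l hl, zero_mul]
      · rw [lowzero y (show j < l by exact Fin.lt_def.2 (by omega)), mul_zero])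

lemma mem_Nk {k : ℕ} {M : TT n R} :
    M ∈ Nk n R k ↔ ∀ i j : Fin n, (j : ℕ) < (i : ℕ) + k →
      (M : Matrix (Fin n) (Fin n) R) i j = 0 :=
  TwoSidedIdeal.mem_mk' _ _ _ _ _ _ _

lemma Nk_mul {s t : ℕ} {a b : TT n R} (ha : a ∈ Nk n R s) (hb : b ∈ Nk n R t) :
    a * b ∈ Nk n R (s + t) := by
  rw [mem_Nk] at ha hb ⊢
  intro i j h
  show ((a : Matrix (Fin n) (Fin n) R) * (b : Matrix (Fin n) (Fin n) R)) i j = 0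
  rw [Matrix.mul_apply]
  apply Finset.sum_eq_zero
  intro l _
  rcases lt_or_ge (l : ℕ) ((i : ℕ) + s) with hl | hl
  · rw [ha i l hl, zero_mul]
  · rw [hb l j (by omega), mul_zero]

lemma Nk_mono {s t : ℕ} (h : s ≤ t) : Nk n R t ≤ Nk n R s := by
  intro M hM
  rw [mem_Nk] at hM ⊢
  intro i j hij
  exact hM i j (by omega)

lemma Nk_top_eq_zero {M : TT n R} (hM : M ∈ Nk n R n) : M = 0 := by
  rw [mem_Nk] at hM
  apply Subtype.ext
  apply Matrix.ext
  intro i j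
  show _ = (0 : Matrix (Fin n) (Fin n) R) i j
  rw [Matrix.zero_apply]
  exact hM i j (by omega)

lemma prime_contains_N1 {P : TwoSidedIdeal (TT n R)} (hP : IsPrimeTSI P) :
    Nk n R 1 ≤ P := by
  have key : ∀ d k : ℕ, 1 ≤ k → n ≤ k + d → Nk n R k ≤ P := by
    intro d
    induction d with
    | zero =>
      intro k _ hk M hM
      have : M = 0 := Nk_top_eq_zero (Nk_mono (by omega) hM)
      rw [this]
      exact P.zero_mem
    | succ d ih =>
      intro k hk1 hkd
      rcases le_or_gt n (k + d) with h | h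
      · exact ih k hk1 h
      · have h2 : Nk n R (k + k) ≤ P := ih (k + k) (by omega) (by omega)
        rcases hP.2 (Nk n R k) (Nk n R k)
            (fun a ha b hb => h2 (Nk_mul ha hb)) with h' | h'
        · exact h'
        · exact h'
  exact key n 1 le_rfl (by omega)

/-- matrices whose diagonal vanishes away from `k` -/
def Fk (k : Fin n) : TwoSidedIdeal (TT n R) :=
  TwoSidedIdeal.mk'
    {M | ∀ l : Fin n, l ≠ k → (M : Matrix (Fin n) (Fin n) R) l l = 0}
    (fun _ _ => rfl)
    (fun {x y} hx hy l hl => by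
      show (x : Matrix (Fin n) (Fin n) R) l l + (y : Matrix (Fin n) (Fin n) R) l l = 0
      rw [hx l hl, hy l hl, add_zero])
    (fun {x} hx l hl => by
      show -(x : Matrix (Fin n) (Fin n) R) l l = 0
      rw [hx l hl, neg_zero])
    (fun {x y} hy l hl => by rw [mul_diag, hy l hl, mul_zero])
    (fun {x y} hx l hl => by rw [mul_diag, hx l hl, zero_mul])

lemma mem_Fk {k : Fin n} {M : TT n R} :
    M ∈ Fk k ↔ ∀ l : Fin n, l ≠ k → (M : Matrix (Fin n) (Fin n) R) l l = 0 :=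
  TwoSidedIdeal.mem_mk' _ _ _ _ _ _ _

lemma Fk_mul_mem_N1 {k k' : Fin n} (hkk : k ≠ k') {a b : TT n R}
    (ha : a ∈ Fk k) (hb : b ∈ Fk k') : a * b ∈ Nk n R 1 := by
  rw [mem_Fk] at ha hb
  rw [mem_Nk]
  intro i j hij
  rcases lt_or_eq_of_le (show (j : ℕ) ≤ (i : ℕ) by omega) with h | h
  · exact lowzero _ (Fin.lt_def.2 h)
  · have : j = i := Fin.ext h
    subst this
    rw [mul_diag]
    rcases ne_or_eq j k with h' | h'
    · rw [ha j h', zero_mul]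
    · rw [hb j (by rw [h']; exact hkk), mul_zero]

end ZoAux

namespace ZoAux

variable {n : ℕ} {R : Type*} [Ring R]

lemma diagSum_apply (M : TT n R) (i j : Fin n) :
    ((∑ l : Fin n, eM l l le_rfl ((M : Matrix (Fin n) (Fin n) R) l l) : TT n R) :
      Matrix (Fin n) (Fin n) R) i j
      = if i = j then (M : Matrix (Fin n) (Fin n) R) i i else 0 := by
  rw [AddSubmonoidClass.coe_finset_sum, Matrix.sum_apply]
  rw [Finset.sum_eq_single i]
  · rw [eM_apply]
    by_cases h : i = j
    · subst h; simp
    · rw [if_neg (by tauto), if_neg h]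
  · intro l _ hl
    rw [eM_apply, if_neg (by tauto)]
  · intro h; exact absurd (Finset.mem_univ i) h

lemma mem_of_diag_zero {P : TwoSidedIdeal (TT n R)} {k : Fin n}
    (hN : Nk n R 1 ≤ P) (hF : ∀ l, l ≠ k → Fk l ≤ P) {M : TT n R}
    (hM : (M : Matrix (Fin n) (Fin n) R) k k = 0) : M ∈ P := by
  set S : TT n R := ∑ l : Fin n, eM l l le_rfl ((M : Matrix (Fin n) (Fin n) R) l l) with hS
  have h1 : M - S ∈ P := by
    apply hN
    rw [mem_Nk]
    intro i j hij
    show (M : Matrix (Fin n) (Fin n) R) i j - (S : Matrix (Fin n) (Fin n) R) i j = 0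
    rw [hS, diagSum_apply]
    rcases lt_or_eq_of_le (show (j : ℕ) ≤ (i : ℕ) by omega) with h | h
    · rw [lowzero M (Fin.lt_def.2 h), if_neg (by
        intro hh; rw [hh] at h; omega), sub_zero]
    · have : i = j := Fin.ext h.symm
      subst this
      rw [if_pos rfl, sub_self]
  have h2 : S ∈ P := by
    rw [hS]
    apply TwoSidedIdeal.finsetSum_mem
    intro l _
    rcases ne_or_eq l k with h | h
    · apply hF l h
      rw [mem_Fk]
      intro l' hl'
      rw [eM_diag, if_neg (fun hh => hl' hh.symm)]
    · subst h
      rw [hM, eM_zero]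
      exact P.zero_mem
  have : M = (M - S) + S := by abel
  rw [this]
  exact P.add_mem h1 h2

/-- lift an ideal of `R` to the ideal of `TT n R` of matrices whose `(k,k)` entry is in it -/
def liftI (k : Fin n) (Q : TwoSidedIdeal R) : TwoSidedIdeal (TT n R) :=
  TwoSidedIdeal.mk'
    {M | (M : Matrix (Fin n) (Fin n) R) k k ∈ Q}
    Q.zero_mem
    (fun {x y} hx hy => by
      show (x : Matrix (Fin n) (Fin n) R) k k + (y : Matrix (Fin n) (Fin n) R) k k ∈ Q
      exact Q.add_mem hx hy)
    (fun {x} hx => by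
      show -(x : Matrix (Fin n) (Fin n) R) k k ∈ Q
      exact Q.neg_mem hx)
    (fun {x y} hy => by
      show _ ∈ Q
      rw [mul_diag]
      exact Q.mul_mem_left _ _ hy)
    (fun {x y} hx => by
      show _ ∈ Q
      rw [mul_diag]
      exact Q.mul_mem_right _ _ hx)

lemma mem_liftI {k : Fin n} {Q : TwoSidedIdeal R} {M : TT n R} :
    M ∈ liftI k Q ↔ (M : Matrix (Fin n) (Fin n) R) k k ∈ Q :=
  TwoSidedIdeal.mem_mk' _ _ _ _ _ _ _

lemma eM_mem_liftI {k : Fin n} {Q : TwoSidedIdeal R} {r : R} :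
    eM k k le_rfl r ∈ liftI k Q ↔ r ∈ Q := by
  rw [mem_liftI, eM_diag, if_pos rfl]

lemma liftI_le_liftI {k : Fin n} {Q Q' : TwoSidedIdeal R} (h : liftI k Q ≤ liftI k Q') :
    Q ≤ Q' := by
  intro r hr
  have := h (eM_mem_liftI.2 hr)
  exact eM_mem_liftI.1 this

lemma liftI_mono {k : Fin n} {Q Q' : TwoSidedIdeal R} (h : Q ≤ Q') :
    liftI k Q ≤ liftI k Q' := fun M hM => mem_liftI.2 (h (mem_liftI.1 hM))

end ZoAux

namespace ZoAux

variable {n : ℕ} {R : Type*} [Ring R]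

lemma one_diag (k : Fin n) : ((1 : TT n R) : Matrix (Fin n) (Fin n) R) k k = 1 := by
  rw [OneMemClass.coe_one, Matrix.one_apply_eq]

lemma prime_structure (hn : 0 < n) (P : TwoSidedIdeal (TT n R)) (hP : IsPrimeTSI P) :
    ∃ (k : Fin n) (Q : TwoSidedIdeal R), IsPrimeTSI Q ∧ P = liftI k Q := by
  have hN1 : Nk n R 1 ≤ P := prime_contains_N1 hP
  obtain ⟨k, hF⟩ : ∃ k : Fin n, ∀ l, l ≠ k → Fk l ≤ P := by
    by_cases hcase : ∀ k : Fin n, Fk k ≤ P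
    · exact ⟨⟨0, hn⟩, fun l _ => hcase l⟩
    · push_neg at hcase
      obtain ⟨k, hk⟩ := hcase
      refine ⟨k, fun l hl => ?_⟩
      rcases hP.2 (Fk l) (Fk k)
          (fun a ha b hb => hN1 (Fk_mul_mem_N1 hl ha hb)) with h | h
      · exact h
      · exact absurd h hk
  have hD : ∀ M : TT n R, (M : Matrix (Fin n) (Fin n) R) k k = 0 → M ∈ P :=
    fun M hM => mem_of_diag_zero hN1 hF hM
  set Q : TwoSidedIdeal R := TwoSidedIdeal.mk'
    {r | eM k k le_rfl r ∈ P}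
    (by show eM k k le_rfl (0:R) ∈ P; rw [eM_zero]; exact P.zero_mem)
    (fun {x y} hx hy => by
      show eM k k le_rfl (x + y) ∈ P; rw [eM_add]; exact P.add_mem hx hy)
    (fun {x} hx => by
      show eM k k le_rfl (-x) ∈ P; rw [eM_neg]; exact P.neg_mem hx)
    (fun {x y} hy => by
      show eM k k le_rfl (x * y) ∈ P; rw [← eM_mul]; exact P.mul_mem_left _ _ hy)
    (fun {x y} hx => by
      show eM k k le_rfl (x * y) ∈ P; rw [← eM_mul]; exact P.mul_mem_right _ _ hx)
    with hQdef
  have mem_Q : ∀ {r : R}, r ∈ Q ↔ eM k k le_rfl r ∈ P := by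
    intro r; rw [hQdef, TwoSidedIdeal.mem_mk']; rfl
  have hsub : ∀ M : TT n R, M - eM k k le_rfl ((M : Matrix (Fin n) (Fin n) R) k k) ∈ P := by
    intro M
    apply hD
    show (M : Matrix (Fin n) (Fin n) R) k k
      - (eM k k le_rfl ((M : Matrix (Fin n) (Fin n) R) k k) : Matrix (Fin n) (Fin n) R) k k = 0
    rw [eM_diag, if_pos rfl, sub_self]
  have hPQ : P = liftI k Q := by
    apply TwoSidedIdeal.ext
    intro M
    rw [mem_liftI, mem_Q]
    constructor
    · intro hM
      have : eM k k le_rfl ((M : Matrix (Fin n) (Fin n) R) k k)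
          = M - (M - eM k k le_rfl ((M : Matrix (Fin n) (Fin n) R) k k)) := by abel
      rw [this]
      exact P.sub_mem hM (hsub M)
    · intro hM
      have : M = (M - eM k k le_rfl ((M : Matrix (Fin n) (Fin n) R) k k))
          + eM k k le_rfl ((M : Matrix (Fin n) (Fin n) R) k k) := by abel
      rw [this]
      exact P.add_mem (hsub M) hM
  refine ⟨k, Q, ⟨?_, ?_⟩, hPQ⟩
  · intro h
    apply hP.1
    apply TwoSidedIdeal.eq_top
    have h1 : eM k k le_rfl (1 : R) ∈ P := mem_Q.1 (h ▸ TwoSidedIdeal.mem_top _)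
    have : (1 : TT n R) = ((1 : TT n R) - eM k k le_rfl (1 : R)) + eM k k le_rfl (1 : R) := by
      abel
    rw [this]
    refine P.add_mem ?_ h1
    apply hD
    show ((1 : TT n R) : Matrix (Fin n) (Fin n) R) k k
      - (eM k k le_rfl (1:R) : Matrix (Fin n) (Fin n) R) k k = 0
    rw [one_diag, eM_diag, if_pos rfl, sub_self]
  · intro A B hAB
    have : ∀ a ∈ liftI k A, ∀ b ∈ liftI k B, a * b ∈ P := by
      intro a ha b hb
      rw [hPQ, mem_liftI, mul_diag]
      exact hAB _ (mem_liftI.1 ha) _ (mem_liftI.1 hb)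
    rcases hP.2 _ _ this with h | h
    · left
      rw [TwoSidedIdeal.le_iff]
      intro r hr
      rw [SetLike.mem_coe, mem_Q]
      exact h (show eM k k le_rfl r ∈ liftI k A from eM_mem_liftI.2 hr)
    · right
      rw [TwoSidedIdeal.le_iff]
      intro r hr
      rw [SetLike.mem_coe, mem_Q]
      exact h (show eM k k le_rfl r ∈ liftI k B from eM_mem_liftI.2 hr)

lemma liftI_ne_top {k : Fin n} {Q : TwoSidedIdeal R} (hQ : Q ≠ ⊤) : liftI k Q ≠ ⊤ := by
  intro h
  apply hQ
  apply TwoSidedIdeal.eq_top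
  have : (1 : TT n R) ∈ liftI k Q := h ▸ TwoSidedIdeal.mem_top _
  rw [mem_liftI, one_diag] at this
  exact this

lemma lift_prime (k : Fin n) (Q : TwoSidedIdeal R) (hQ : IsPrimeTSI Q) :
    IsPrimeTSI (liftI k Q) := by
  refine ⟨liftI_ne_top hQ.1, ?_⟩
  intro A B hAB
  let proj : TwoSidedIdeal (TT n R) → TwoSidedIdeal R := fun C => TwoSidedIdeal.mk'
    {r | ∃ a ∈ C, (a : Matrix (Fin n) (Fin n) R) k k = r}
    ⟨0, C.zero_mem, by rw [ZeroMemClass.coe_zero, Matrix.zero_apply]⟩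
    (fun {x y} ⟨a, ha, hak⟩ ⟨b, hb, hbk⟩ => ⟨a + b, C.add_mem ha hb, by
      rw [AddMemClass.coe_add, Matrix.add_apply, hak, hbk]⟩)
    (fun {x} ⟨a, ha, hak⟩ => ⟨-a, C.neg_mem ha, by
      rw [NegMemClass.coe_neg, Matrix.neg_apply, hak]⟩)
    (fun {x y} ⟨a, ha, hak⟩ => ⟨eM k k le_rfl x * a, C.mul_mem_left _ _ ha, by
      rw [mul_diag, eM_diag, if_pos rfl, hak]⟩)
    (fun {x y} ⟨a, ha, hak⟩ => ⟨a * eM k k le_rfl y, C.mul_mem_right _ _ ha, by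
      rw [mul_diag, eM_diag, if_pos rfl, hak]⟩)
  have mem_proj : ∀ (C : TwoSidedIdeal (TT n R)) (r : R),
      r ∈ proj C ↔ ∃ a ∈ C, (a : Matrix (Fin n) (Fin n) R) k k = r := by
    intro C r
    exact TwoSidedIdeal.mem_mk' _ _ _ _ _ _ _
  have key : ∀ a ∈ proj A, ∀ b ∈ proj B, a * b ∈ Q := by
    intro r hr s hs
    obtain ⟨a, ha, rfl⟩ := (mem_proj A r).1 hr
    obtain ⟨b, hb, rfl⟩ := (mem_proj B s).1 hs
    rw [← mul_diag]
    exact mem_liftI.1 (hAB a ha b hb)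
  rcases hQ.2 _ _ key with h | h
  · left
    intro a ha
    exact mem_liftI.2 (h ((mem_proj A _).2 ⟨a, ha, rfl⟩))
  · right
    intro b hb
    exact mem_liftI.2 (h ((mem_proj B _).2 ⟨b, hb, rfl⟩))

lemma minprime_structure (hn : 0 < n) (P : TwoSidedIdeal (TT n R)) (hP : IsMinPrime P) :
    ∃ (k : Fin n) (Q : TwoSidedIdeal R), IsMinPrime Q ∧ P = liftI k Q := by
  obtain ⟨k, Q, hQ, rfl⟩ := prime_structure hn P hP.1
  refine ⟨k, Q, ⟨hQ, ?_⟩, rfl⟩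
  intro Q' hQ' hle
  have h1 : liftI k Q' ≤ liftI k Q := liftI_mono hle
  have h2 := hP.2 (liftI k Q') (lift_prime k Q' hQ') h1
  exact le_antisymm hle (liftI_le_liftI h2.symm.le)

lemma lift_minprime (hn : 0 < n) (k : Fin n) (Q : TwoSidedIdeal R) (hQ : IsMinPrime Q) :
    IsMinPrime (liftI k Q) := by
  refine ⟨lift_prime k Q hQ.1, ?_⟩
  intro P' hP' hle
  obtain ⟨k', Q'', hQ'', rfl⟩ := prime_structure hn P' hP'
  have hkk : k' = k := by
    by_contra hne
    have hM : (1 : TT n R) - eM k' k' le_rfl (1 : R) ∈ liftI k' Q'' := by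
      rw [mem_liftI]
      show ((1 : TT n R) : Matrix (Fin n) (Fin n) R) k' k'
        - (eM k' k' le_rfl (1:R) : Matrix (Fin n) (Fin n) R) k' k' ∈ Q''
      rw [one_diag, eM_diag, if_pos rfl, sub_self]
      exact Q''.zero_mem
    have := hle hM
    rw [mem_liftI] at this
    have h1 : ((1 : TT n R) : Matrix (Fin n) (Fin n) R) k k
        - (eM k' k' le_rfl (1:R) : Matrix (Fin n) (Fin n) R) k k = (1 : R) := by
      rw [one_diag, eM_diag, if_neg hne, sub_zero]
    rw [show (((1 : TT n R) - eM k' k' le_rfl (1 : R) : TT n R) :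
        Matrix (Fin n) (Fin n) R) k k = _ from h1] at this
    exact hQ.1.1 (TwoSidedIdeal.eq_top _ this)
  subst hkk
  have : Q'' = Q := hQ.2 Q'' hQ'' (liftI_le_liftI hle)
  rw [this]

end ZoAux

namespace ZoAux

variable {n : ℕ} {R : Type*} [Ring R]

lemma mem_Pa' {S : Type*} [Ring S] {a x : S} :
    x ∈ Pa a ↔ ∀ P : TwoSidedIdeal S, IsMinPrime P → a ∈ P → x ∈ P := by
  unfold Pa Pmin
  constructor
  · intro h P hP haP
    exact Set.mem_iInter₂.1 h P ⟨hP, Set.singleton_subset_iff.2 haP⟩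
  · intro h
    exact Set.mem_iInter₂.2 fun P hP => h P hP.1 (Set.singleton_subset_iff.1 hP.2)

end ZoAux


open ZoAux

/-- Theorem 4.5: the ideal of `Tₙ(R)` determined by the ideals `J i j` (`i ≤ j`) is a
z°-ideal iff each diagonal `J i i` is a z°-ideal of `R` and `J i j = R` for `i < j`. -/
theorem stmt8 (R : Type*) [Ring R] (n : ℕ) (hn : 0 < n)
    (J : Fin n → Fin n → TwoSidedIdeal R)
    (hrow : ∀ i j k : Fin n, i ≤ j → j ≤ k → J i j ≤ J i k)
    (hcol : ∀ i j k : Fin n, i ≤ j → j ≤ k → J j k ≤ J i k)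
    (I : TwoSidedIdeal (upperTriangularSubring n R))
    (hI : (I : Set (upperTriangularSubring n R)) =
      {M : upperTriangularSubring n R |
        ∀ i j : Fin n, i ≤ j → (M : Matrix (Fin n) (Fin n) R) i j ∈ J i j}) :
    IsZoIdeal I ↔
      (∀ i : Fin n, IsZoIdeal (J i i)) ∧ (∀ i j : Fin n, i < j → J i j = ⊤) := by
  constructor
  · intro h
    constructor
    · intro i a ha x hx
      have hA : eM i i le_rfl a ∈ I := by
        rw [← SetLike.mem_coe, hI]
        intro k l hkl
        rw [eM_apply]
        by_cases hc : i = k ∧ i = l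
        · obtain ⟨rfl, rfl⟩ := hc
          rw [if_pos ⟨rfl, rfl⟩]
          exact ha
        · rw [if_neg hc]
          exact (J k l).zero_mem
      have hx' : eM i i le_rfl x ∈ Pa (eM i i le_rfl a) := by
        rw [mem_Pa']
        intro P hP haP
        obtain ⟨k, Q, hQ, rfl⟩ := minprime_structure hn P hP
        rw [mem_liftI, eM_diag]
        by_cases hik : i = k
        · subst hik
          rw [if_pos rfl]
          have haQ : a ∈ Q := by
            have := mem_liftI.1 haP
            rwa [eM_diag, if_pos rfl] at this
          exact mem_Pa'.1 hx Q hQ haQ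
        · rw [if_neg hik]
          exact Q.zero_mem
      have hmem := h _ hA hx'
      rw [hI] at hmem
      have := hmem i i le_rfl
      rwa [eM_diag, if_pos rfl] at this
    · intro i j hij
      apply TwoSidedIdeal.eq_top
      have h0 : (0 : upperTriangularSubring n R) ∈ I := by
        rw [← SetLike.mem_coe, hI]
        intro k l hkl
        show ((0 : upperTriangularSubring n R) : Matrix (Fin n) (Fin n) R) k l ∈ J k l
        rw [ZeroMemClass.coe_zero, Matrix.zero_apply]
        exact (J k l).zero_mem
      have hstd : eM i j (le_of_lt hij) 1 ∈ Pa (0 : upperTriangularSubring n R) := by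
        rw [mem_Pa']
        intro P hP _
        apply prime_contains_N1 hP.1
        rw [mem_Nk]
        intro k l hkl
        rw [eM_apply, if_neg]
        rintro ⟨rfl, rfl⟩
        rw [Fin.lt_def] at hij
        omega
      have hmem := h _ h0 hstd
      rw [hI] at hmem
      have := hmem i j (le_of_lt hij)
      rwa [eM_apply, if_pos ⟨rfl, rfl⟩] at this
  · rintro ⟨hdiag, hoff⟩
    intro A hA x hx
    rw [hI]
    intro i j hij
    rcases lt_or_eq_of_le hij with hlt | heq
    · rw [hoff i j hlt]
      exact TwoSidedIdeal.mem_top _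
    · subst heq
      have hA' : A ∈ (I : Set (upperTriangularSubring n R)) := hA
      rw [hI] at hA'
      have hAii : (A : Matrix (Fin n) (Fin n) R) i i ∈ J i i := hA' i i le_rfl
      apply hdiag i _ hAii
      rw [mem_Pa']
      intro Q hQ haQ
      have hlift : IsMinPrime (liftI i Q) := lift_minprime hn i Q hQ
      have hAP : A ∈ liftI i Q := mem_liftI.2 haQ
      exact mem_liftI.1 (mem_Pa'.1 hx (liftI i Q) hlift hAP)
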